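/- Let b, n, d be natural numbers with n ≤ b, and let κ ≥ 0. Let c, L, U : Fin b → Fin d → ℝ be the nominal clipped per-sample gradients and their element-wise bounds, satisfying −κ ≤ L i j ≤ c i j ≤ U i j ≤ κ for all i, j. Let c̃ : Fin b → Fin d → ℝ be a perturbed family of clipped gradients such that −κ ≤ c̃ i j ≤ κ for all i, j, and there exists a subset S ⊆ Fin b with |S| ≥ b − n and c̃ i = c i for all i ∈ S (i.e., up to n samples are replaced by arbitrary samples). Then for every coordinate j : Fin d, (1/b) · (SEMin_{b−n}{L i j}_{i=1}^{b} − n·κ) ≤ (1/b) · ∑_{i=1}^{b} c̃ i j ≤ (1/b) · (SEMax_{b−n}{U i j}_{i=1}^{b} + n·κ). (Theorem: descent direction bounds under arbitrary substitution of up to n samples with element-wise gradient clipping at level κ.) -/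

import Mathlib

lemma take_sum_le_of_sorted :
    ∀ (l : List ℝ), l.Pairwise (· ≤ ·) → ∀ m : Multiset ℝ, m ≤ (l : Multiset ℝ) →
      (l.take (Multiset.card m)).sum ≤ m.sum := by
  intro l
  induction l with
  | nil =>
    intro _ m hm
    have : m = 0 := Multiset.le_zero.mp hm
    simp [this]
  | cons x l ih =>
    intro hs m hm
    rcases Nat.eq_zero_or_pos (Multiset.card m) with h0 | hpos
    · rw [Multiset.card_eq_zero] at h0; simp [h0]
    · have hxall : ∀ z ∈ l, x ≤ z := (List.pairwise_cons.mp hs).1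
      have hsl : l.Pairwise (· ≤ ·) := (List.pairwise_cons.mp hs).2
      by_cases hx : x ∈ m
      · obtain ⟨m', rfl⟩ := Multiset.exists_cons_of_mem hx
        have hm' : m' ≤ (l : Multiset ℝ) := by
          rw [show ((x :: l : List ℝ) : Multiset ℝ) = x ::ₘ (l : Multiset ℝ) from rfl] at hm
          exact (Multiset.cons_le_cons_iff x).mp hm
        simp only [Multiset.card_cons, List.take_succ_cons, List.sum_cons, Multiset.sum_cons]
        exact add_le_add le_rfl (ih hsl m' hm')
      · have hml : m ≤ (l : Multiset ℝ) := by
          rw [Multiset.le_iff_count] at hm ⊢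
          intro a
          rcases eq_or_ne a x with rfl | hne
          · simp [Multiset.count_eq_zero_of_notMem hx]
          · have := hm a
            rwa [show ((x :: l : List ℝ) : Multiset ℝ) = x ::ₘ (l : Multiset ℝ) from rfl,
              Multiset.count_cons_of_ne hne] at this
        obtain ⟨y, hy⟩ := Multiset.card_pos_iff_exists_mem.mp hpos
        obtain ⟨m', rfl⟩ := Multiset.exists_cons_of_mem hy
        have hyl : y ∈ (l : Multiset ℝ) := Multiset.mem_of_le hml (Multiset.mem_cons_self y m')
        have hxy : x ≤ y := hxall y (by simpa using hyl)
        have hm'l : m' ≤ (l : Multiset ℝ) := le_trans (Multiset.le_cons_self m' y) hml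
        simp only [Multiset.card_cons, List.take_succ_cons, List.sum_cons, Multiset.sum_cons]
        exact add_le_add hxy (ih hsl m' hm'l)

lemma sum_le_take_of_sorted_ge :
    ∀ (l : List ℝ), l.Pairwise (· ≥ ·) → ∀ m : Multiset ℝ, m ≤ (l : Multiset ℝ) →
      m.sum ≤ (l.take (Multiset.card m)).sum := by
  intro l
  induction l with
  | nil =>
    intro _ m hm
    have : m = 0 := Multiset.le_zero.mp hm
    simp [this]
  | cons x l ih =>
    intro hs m hm
    rcases Nat.eq_zero_or_pos (Multiset.card m) with h0 | hpos
    · rw [Multiset.card_eq_zero] at h0; simp [h0]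
    · have hxall : ∀ z ∈ l, z ≤ x := (List.pairwise_cons.mp hs).1
      have hsl : l.Pairwise (· ≥ ·) := (List.pairwise_cons.mp hs).2
      by_cases hx : x ∈ m
      · obtain ⟨m', rfl⟩ := Multiset.exists_cons_of_mem hx
        have hm' : m' ≤ (l : Multiset ℝ) := by
          rw [show ((x :: l : List ℝ) : Multiset ℝ) = x ::ₘ (l : Multiset ℝ) from rfl] at hm
          exact (Multiset.cons_le_cons_iff x).mp hm
        simp only [Multiset.card_cons, List.take_succ_cons, List.sum_cons, Multiset.sum_cons]
        exact add_le_add le_rfl (ih hsl m' hm')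
      · have hml : m ≤ (l : Multiset ℝ) := by
          rw [Multiset.le_iff_count] at hm ⊢
          intro a
          rcases eq_or_ne a x with rfl | hne
          · simp [Multiset.count_eq_zero_of_notMem hx]
          · have := hm a
            rwa [show ((x :: l : List ℝ) : Multiset ℝ) = x ::ₘ (l : Multiset ℝ) from rfl,
              Multiset.count_cons_of_ne hne] at this
        obtain ⟨y, hy⟩ := Multiset.card_pos_iff_exists_mem.mp hpos
        obtain ⟨m', rfl⟩ := Multiset.exists_cons_of_mem hy
        have hyl : y ∈ (l : Multiset ℝ) := Multiset.mem_of_le hml (Multiset.mem_cons_self y m')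
        have hxy : y ≤ x := hxall y (by simpa using hyl)
        have hm'l : m' ≤ (l : Multiset ℝ) := le_trans (Multiset.le_cons_self m' y) hml
        simp only [Multiset.card_cons, List.take_succ_cons, List.sum_cons, Multiset.sum_cons]
        exact add_le_add hxy (ih hsl m' hm'l)

/-- `SEMin a k`: the sum of the `k` smallest elements of the family `a`
(counted with multiplicity). -/
noncomputable def SEMin {b : ℕ} (a : Fin b → ℝ) (k : ℕ) : ℝ :=
  (((List.ofFn a).mergeSort (· ≤ ·)).take k).sum

/-- `SEMax a k`: the sum of the `k` largest elements of the family `a`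
(counted with multiplicity). -/
noncomputable def SEMax {b : ℕ} (a : Fin b → ℝ) (k : ℕ) : ℝ :=
  (((List.ofFn a).mergeSort (· ≥ ·)).take k).sum

lemma finset_multiset_le {b : ℕ} (a : Fin b → ℝ) (T : Finset (Fin b)) :
    (T.val.map a : Multiset ℝ) ≤ ((List.ofFn a : List ℝ) : Multiset ℝ) := by
  rw [List.ofFn_eq_map]
  have h2 : ((List.map a (List.finRange b) : List ℝ) : Multiset ℝ)
      = Multiset.map a ((Finset.univ : Finset (Fin b)).val) := by
    simp [Fin.univ_def]
  rw [h2]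
  exact Multiset.map_le_map (Finset.val_le_iff.mpr (Finset.subset_univ T))

lemma SEMin_le_sum {b : ℕ} (a : Fin b → ℝ) (T : Finset (Fin b)) :
    SEMin a T.card ≤ ∑ i ∈ T, a i := by
  set l := (List.ofFn a).mergeSort (· ≤ ·) with hl
  have hsort : l.Pairwise (· ≤ ·) := by
    have := List.pairwise_mergeSort (le := fun a b : ℝ => decide (a ≤ b)) ?_ ?_ (List.ofFn a)
    · exact this.imp (fun h => of_decide_eq_true h)
    · intro a b c hab hbc; simp_all; linarith
    · intro a b; simp [le_total]
  have hperm : (l : Multiset ℝ) = ((List.ofFn a : List ℝ) : Multiset ℝ) :=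
    Multiset.coe_eq_coe.mpr (List.mergeSort_perm _ _)
  set m : Multiset ℝ := T.val.map a with hm
  have hcard : Multiset.card m = T.card := by simp [hm]
  have hmle : m ≤ (l : Multiset ℝ) := hperm ▸ finset_multiset_le a T
  have h3 := take_sum_le_of_sorted l hsort m hmle
  rw [hcard] at h3
  rw [SEMin, Finset.sum_eq_multiset_sum]
  exact h3

lemma sum_le_SEMax {b : ℕ} (a : Fin b → ℝ) (T : Finset (Fin b)) :
    ∑ i ∈ T, a i ≤ SEMax a T.card := by
  set l := (List.ofFn a).mergeSort (· ≥ ·) with hl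
  have hsort : l.Pairwise (· ≥ ·) := by
    have := List.pairwise_mergeSort (le := fun a b : ℝ => decide (a ≥ b)) ?_ ?_ (List.ofFn a)
    · exact this.imp (fun h => of_decide_eq_true h)
    · intro a b c hab hbc; simp_all; linarith
    · intro a b; simp [le_total]
  have hperm : (l : Multiset ℝ) = ((List.ofFn a : List ℝ) : Multiset ℝ) :=
    Multiset.coe_eq_coe.mpr (List.mergeSort_perm _ _)
  set m : Multiset ℝ := T.val.map a with hm
  have hcard : Multiset.card m = T.card := by simp [hm]
  have hmle : m ≤ (l : Multiset ℝ) := hperm ▸ finset_multiset_le a T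
  have h3 := sum_le_take_of_sorted_ge l hsort m hmle
  rw [hcard] at h3
  rw [SEMax, Finset.sum_eq_multiset_sum]
  exact h3

/-- Descent direction bounds under arbitrary substitution of up to `n` of the `b`
training samples, with element-wise gradient clipping at level `κ`. -/
theorem descent_direction_bounds_substitution
    (b n d : ℕ) (hn : n ≤ b) (κ : ℝ) (hκ : 0 ≤ κ)
    (c L U : Fin b → Fin d → ℝ)
    (hLκ : ∀ i j, -κ ≤ L i j) (hL : ∀ i j, L i j ≤ c i j)
    (hU : ∀ i j, c i j ≤ U i j) (hUκ : ∀ i j, U i j ≤ κ)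
    (c' : Fin b → Fin d → ℝ)
    (hc'lo : ∀ i j, -κ ≤ c' i j) (hc'hi : ∀ i j, c' i j ≤ κ)
    (S : Finset (Fin b)) (hScard : b - n ≤ S.card)
    (hSfix : ∀ i ∈ S, c' i = c i) (j : Fin d) :
    (1 / (b : ℝ)) * (SEMin (fun i => L i j) (b - n) - n * κ) ≤
        (1 / (b : ℝ)) * ∑ i, c' i j ∧
      (1 / (b : ℝ)) * ∑ i, c' i j ≤
        (1 / (b : ℝ)) * (SEMax (fun i => U i j) (b - n) + n * κ) := by
  obtain ⟨T, hTS, hTcard⟩ := Finset.exists_subset_card_eq hScard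
  have hsplit : ∑ i ∈ T, c' i j + ∑ i ∈ Tᶜ, c' i j = ∑ i, c' i j :=
    Finset.sum_add_sum_compl T _
  have hTc : ∀ i ∈ T, c' i j = c i j := fun i hi => by rw [hSfix i (hTS hi)]
  have hcompl : (Tᶜ : Finset (Fin b)).card = n := by
    rw [Finset.card_compl, hTcard]
    simp [Nat.sub_sub_self hn]
  have hbnn : (0 : ℝ) ≤ 1 / (b : ℝ) := by positivity
  constructor
  · apply mul_le_mul_of_nonneg_left _ hbnn
    have h1 : SEMin (fun i => L i j) (b - n) ≤ ∑ i ∈ T, c' i j := by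
      calc SEMin (fun i => L i j) (b - n)
          = SEMin (fun i => L i j) T.card := by rw [hTcard]
        _ ≤ ∑ i ∈ T, L i j := SEMin_le_sum _ T
        _ ≤ ∑ i ∈ T, c' i j :=
            Finset.sum_le_sum fun i hi => (hTc i hi) ▸ hL i j
    have h2 : -((n : ℝ) * κ) ≤ ∑ i ∈ Tᶜ, c' i j := by
      calc -((n : ℝ) * κ) = ∑ _i ∈ (Tᶜ : Finset (Fin b)), (-κ) := by
            rw [Finset.sum_const, hcompl, nsmul_eq_mul]; ring
        _ ≤ ∑ i ∈ Tᶜ, c' i j := Finset.sum_le_sum fun i _ => hc'lo i j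
    linarith [hsplit]
  · apply mul_le_mul_of_nonneg_left _ hbnn
    have h1 : ∑ i ∈ T, c' i j ≤ SEMax (fun i => U i j) (b - n) := by
      calc ∑ i ∈ T, c' i j
          ≤ ∑ i ∈ T, U i j :=
            Finset.sum_le_sum fun i hi => (hTc i hi) ▸ hU i j
        _ ≤ SEMax (fun i => U i j) T.card := sum_le_SEMax _ T
        _ = SEMax (fun i => U i j) (b - n) := by rw [hTcard]
    have h2 : ∑ i ∈ Tᶜ, c' i j ≤ (n : ℝ) * κ := by
      calc ∑ i ∈ Tᶜ, c' i j ≤ ∑ _i ∈ (Tᶜ : Finset (Fin b)), κ :=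
            Finset.sum_le_sum fun i _ => hc'hi i j
        _ = (n : ℝ) * κ := by rw [Finset.sum_const, hcompl, nsmul_eq_mul]
    linarith [hsplit]
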